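/- Let a be a nonzero integer and let (a_0,…,a_k) be a sequence of integers with each a_j ∈ {0, a, −a}. Then (a_0,…,a_k) is a-admissible — i.e. Σ_{j=0}^{k} a_j = a and |a_s + a_{s+1} + ⋯ + a_u| ≤ |a| for all 0 ≤ s ≤ u ≤ k — if and only if the subsequence of its nonzero entries is nonempty, the entries of this subsequence alternate between the values a and −a, and its first and last entries are both equal to a. -/

import Mathlib

open Finset

/-- Tracks alternation: at "level" `c`, the list of nonzero entries must alternate,
with final level `d`. -/
def AltSeq (a : ℤ) : ℤ → List ℤ → ℤ → Prop
  | c, [], d => d = c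
  | c, x :: t, d => x = a - 2*c ∧ AltSeq a (c + x) t d

lemma altSeq_iff (a : ℤ) (g : List ℤ) : ∀ (c d : ℤ),
    AltSeq a c g d ↔ (List.Chain' (fun x y => y = -x) ((2*c - a) :: g) ∧ d = c + g.sum) := by
  induction g with
  | nil => intro c d; simp [AltSeq, List.Chain', List.isChain_singleton]
  | cons x t ih =>
    intro c d
    show (x = a - 2*c ∧ AltSeq a (c + x) t d) ↔ _
    rw [ih (c + x) d]; simp only [List.Chain', List.isChain_cons_cons]
    constructor
    · rintro ⟨hx, hc, hsum⟩
      refine ⟨⟨by omega, ?_⟩, by simp; omega⟩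
      convert hc using 2
      omega
    · rintro ⟨⟨hx, hc⟩, hsum⟩
      have hx' : x = a - 2*c := by omega
      refine ⟨hx', ?_, by simp at hsum ⊢; omega⟩
      convert hc using 2
      omega

lemma altSeq_getLast (a : ℤ) (g : List ℤ) : ∀ (c d : ℤ), g ≠ [] → AltSeq a c g d →
    g.getLast? = some (2*d - a) := by
  induction g with
  | nil => simp
  | cons x t ih =>
    intro c d _ h
    obtain ⟨hx, h2⟩ := h
    rcases eq_or_ne t [] with rfl | ht
    · simp [AltSeq] at h2
      simp
      omega
    · obtain ⟨y, t', rfl⟩ := List.exists_cons_of_ne_nil ht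
      rw [List.getLast?_cons_cons]
      exact ih (c + x) d ht h2

lemma key_lemma (a : ℤ) (ha : a ≠ 0) (l : List ℤ) : ∀ (c : ℤ), (c = 0 ∨ c = a) →
    (∀ x ∈ l, x = 0 ∨ x = a ∨ x = -a) →
    ((∀ p, p <+: l → c + p.sum = 0 ∨ c + p.sum = a) ↔
      AltSeq a c (l.filter fun x => decide (x ≠ 0)) (c + l.sum)) := by
  induction l with
  | nil =>
    intro c hc _
    constructor
    · intro _
      show ((c + List.sum []) = c)
      simp
    · intro _ p hp
      rw [List.prefix_nil.mp hp]
      simpa using hc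
  | cons x t ih =>
    intro c hc hmem
    have hx : x = 0 ∨ x = a ∨ x = -a := hmem x (by simp)
    have hmem' : ∀ y ∈ t, y = 0 ∨ y = a ∨ y = -a := fun y hy => hmem y (by simp [hy])
    -- reduce the prefix condition
    have hpre : (∀ p, p <+: x :: t → c + p.sum = 0 ∨ c + p.sum = a) ↔
        (∀ q, q <+: t → (c + x) + q.sum = 0 ∨ (c + x) + q.sum = a) := by
      constructor
      · intro H q hq
        have := H (x :: q) (List.cons_prefix_cons.mpr ⟨rfl, hq⟩)
        simp at this
        omega
      · intro H p hp
        rcases p with _ | ⟨y, q⟩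
        · simpa using hc
        · obtain ⟨rfl, hq⟩ := List.cons_prefix_cons.mp hp
          have := H q hq
          simp
          omega
    rcases eq_or_ne x 0 with rfl | hx0
    · rw [hpre]
      rw [List.filter_cons_of_neg (by simp), List.sum_cons, zero_add]
      rw [← ih c hc hmem']
      constructor
      · intro H q hq; have := H q hq; omega
      · intro H q hq; have := H q hq; omega
    · have hxa : x = a ∨ x = -a := by tauto
      rw [hpre]
      have hfil : (x :: t).filter (fun x => decide (x ≠ 0)) =
          x :: t.filter (fun x => decide (x ≠ 0)) := by
        rw [List.filter_cons_of_pos (by simp [hx0])]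
      rw [hfil]
      show _ ↔ (x = a - 2*c ∧ AltSeq a (c + x) _ _)
      constructor
      · intro H
        have hcx : c + x = 0 ∨ c + x = a := by simpa using H [] (List.nil_prefix)
        have hxeq : x = a - 2*c := by
          rcases hc with rfl | rfl <;> rcases hxa with rfl | rfl <;> omega
        refine ⟨hxeq, ?_⟩
        have := (ih (c + x) (by rcases hcx with h | h <;> [left; right] <;> omega) hmem').mp H
        convert this using 1
        simp; ring
      · rintro ⟨hxeq, hAlt⟩
        have hcx : c + x = 0 ∨ c + x = a := by
          rcases hc with rfl | rfl <;> omega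
        rw [ih (c + x) hcx hmem']
        convert hAlt using 1
        simp; ring

lemma alt_main (a : ℤ) (ha : a ≠ 0) (g : List ℤ) :
    AltSeq a 0 g a ↔ (g ≠ [] ∧ List.Chain' (fun x y => y = -x) g ∧
      g.head? = some a ∧ g.getLast? = some a) := by
  constructor
  · intro h
    have h' := (altSeq_iff a g 0 a).mp h
    obtain ⟨hchain, hsum⟩ := h'
    have hne : g ≠ [] := by
      rintro rfl
      simp at hsum
      omega
    refine ⟨hne, hchain.tail, ?_, ?_⟩
    · rcases g with _ | ⟨y, t⟩
      · simp at hne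
      · simp only [List.Chain', List.isChain_cons_cons] at hchain
        have : y = a := by have := hchain.1; omega
        simp [this]
    · have := altSeq_getLast a g 0 a hne h
      rw [this]
      congr 1
      omega
  · rintro ⟨hne, hchain, hhead, hlast⟩
    have hchain' : List.Chain' (fun x y => y = -x) ((2*(0:ℤ) - a) :: g) := by
      simp only [List.Chain', List.isChain_cons]
      refine ⟨?_, hchain⟩
      intro y hy
      rw [hhead] at hy
      simp at hy
      omega
    have hAlt : AltSeq a 0 g (0 + g.sum) :=
      (altSeq_iff a g 0 (0 + g.sum)).mpr ⟨hchain', rfl⟩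
    have := altSeq_getLast a g 0 (0 + g.sum) hne hAlt
    rw [hlast] at this
    have hsum : (0 : ℤ) + g.sum = a := by
      have := Option.some.inj this
      omega
    rwa [hsum] at hAlt

lemma sum_filter_ne_zero (l : List ℤ) :
    (l.filter fun x => decide (x ≠ 0)).sum = l.sum := by
  induction l with
  | nil => simp
  | cons x t ih =>
    rcases eq_or_ne x 0 with rfl | hx0
    · rw [List.filter_cons_of_neg (by simp), List.sum_cons, ih, zero_add]
    · rw [List.filter_cons_of_pos (by simp [hx0]), List.sum_cons, List.sum_cons, ih]

theorem admissible_iff_alternating (a : ℤ) (ha : a ≠ 0)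
    (m : ℕ) (f : Fin (m + 1) → ℤ)
    (hf : ∀ j, f j = 0 ∨ f j = a ∨ f j = -a) :
    ((∑ j, f j = a) ∧
      ∀ s u : Fin (m + 1), s ≤ u → |∑ j ∈ Finset.Icc s u, f j| ≤ |a|)
    ↔ (((List.ofFn f).filter fun x => decide (x ≠ 0)) ≠ [] ∧
        List.Chain' (fun x y => y = -x) ((List.ofFn f).filter fun x => decide (x ≠ 0)) ∧
        ((List.ofFn f).filter fun x => decide (x ≠ 0)).head? = some a ∧
        ((List.ofFn f).filter fun x => decide (x ≠ 0)).getLast? = some a) := by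
  set l := List.ofFn f with hl
  -- the extended function and its partial sums
  set F : ℕ → ℤ := fun i => if h : i < m + 1 then f ⟨i, h⟩ else 0 with hF
  set S : ℕ → ℤ := fun n => ∑ i ∈ Finset.range n, F i with hS
  have hFval : ∀ j : Fin (m + 1), F j.val = f j := by
    intro j
    simp [hF, j.isLt]
    intro h; have := j.isLt; omega
  have htot : (∑ j, f j) = S (m + 1) := by
    have h1 : (∑ j, f j) = ∑ j : Fin (m + 1), F j.val :=
      Finset.sum_congr rfl fun j _ => (hFval j).symm
    rw [h1]
    exact Fin.sum_univ_eq_sum_range F (m + 1)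
  have hIcc : ∀ s u : Fin (m + 1), s ≤ u →
      (∑ j ∈ Finset.Icc s u, f j) = S (u.val + 1) - S s.val := by
    intro s u hsu
    have h1 : (∑ j ∈ Finset.Icc s u, f j) = ∑ i ∈ Finset.Icc s.val u.val, F i := by
      rw [← Fin.map_valEmbedding_Icc, Finset.sum_map]
      exact Finset.sum_congr rfl fun j _ => (hFval j).symm
    rw [h1, ← Finset.Ico_add_one_right_eq_Icc, Finset.sum_Ico_eq_sub F (by omega : s.val ≤ u.val + 1)]
  have htake : ∀ n, n ≤ m + 1 → (l.take n).sum = S n := by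
    intro n hn
    induction n with
    | zero => simp [hS]
    | succ k ihk =>
      have hk : k < l.length := by rw [hl, List.length_ofFn]; omega
      rw [List.sum_take_succ l k hk, ihk (by omega)]
      have hstep : S (k + 1) = S k + F k := Finset.sum_range_succ F k
      rw [hstep]
      congr 1
      show l[k] = F k
      have hk' : k < m + 1 := by omega
      have h1 : l[k] = f ⟨k, by simpa [hl] using hk⟩ := List.getElem_ofFn (by simpa [hl] using hk)
      rw [h1, ← hFval ⟨k, hk'⟩]
  have hlsum : l.sum = ∑ j, f j := by rw [hl, List.sum_ofFn]
  have hdvd : ∀ n, a ∣ S n := by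
    intro n
    apply Finset.dvd_sum
    intro i _
    rcases lt_or_ge i (m + 1) with h | h
    · have := hf ⟨i, h⟩
      rcases this with h' | h' | h' <;> simp [hF, h, h', dvd_neg, Nat.le_of_lt_succ h]
    · simp [hF, Nat.not_lt.mpr h]; rw [dif_neg (by omega)]; simp
  -- main reduction: LHS ↔ partial sums in {0, a} and total a
  have hmain : ((∑ j, f j = a) ∧
      ∀ s u : Fin (m + 1), s ≤ u → |∑ j ∈ Finset.Icc s u, f j| ≤ |a|) ↔
      ((∀ n ≤ m + 1, S n = 0 ∨ S n = a) ∧ S (m + 1) = a) := by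
    constructor
    · rintro ⟨hsum, hint⟩
      rw [htot] at hsum
      refine ⟨?_, hsum⟩
      intro n hn
      rcases Nat.eq_or_lt_of_le hn with rfl | hn'
      · right; exact hsum
      rcases Nat.eq_zero_or_pos n with rfl | hn0
      · left; simp [hS]
      -- n ≥ 1, n ≤ m
      have h1 : |S n| ≤ |a| := by
        have := hint ⟨0, by omega⟩ ⟨n - 1, by omega⟩ (by simp [Fin.le_def])
        rw [hIcc _ _ (by simp [Fin.le_def])] at this
        have h0 : S 0 = 0 := by simp [hS]
        simp only at this
        have hn1 : n - 1 + 1 = n := by omega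
        rw [hn1, h0, sub_zero] at this
        exact this
      have h2 : |a - S n| ≤ |a| := by
        have := hint ⟨n, by omega⟩ ⟨m, by omega⟩ (by simp [Fin.le_def]; omega)
        rw [hIcc _ _ (by simp [Fin.le_def]; omega)] at this
        simp only at this
        rwa [hsum] at this
      obtain ⟨c, hc⟩ := hdvd n
      rw [hc] at h1 h2 ⊢
      rw [abs_mul] at h1
      have hc1 : |c| ≤ 1 := by
        by_contra hcon
        push_neg at hcon
        have : |a| * 2 ≤ |a| * |c| := by
          apply mul_le_mul_of_nonneg_left (by omega) (abs_nonneg a)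
        have ha' : 0 < |a| := abs_pos.mpr ha
        nlinarith [h1]
      have h2' : |a * (1 - c)| ≤ |a| := by
        have : a - a * c = a * (1 - c) := by ring
        rwa [this] at h2
      rw [abs_mul] at h2'
      have hc2 : |1 - c| ≤ 1 := by
        by_contra hcon
        push_neg at hcon
        have ha' : 0 < |a| := abs_pos.mpr ha
        nlinarith [h2']
      have : c = 0 ∨ c = 1 := by
        rcases abs_le.mp hc1 with ⟨u1, u2⟩
        rcases abs_le.mp hc2 with ⟨v1, v2⟩
        omega
      rcases this with rfl | rfl
      · left; ring
      · right; ring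
    · rintro ⟨hall, hlast⟩
      rw [htot]
      refine ⟨hlast, ?_⟩
      intro s u hsu
      rw [hIcc s u hsu]
      have h1 := hall (u.val + 1) (by omega)
      have h2 := hall s.val (by omega)
      rcases h1 with h1 | h1 <;> rcases h2 with h2 | h2 <;> rw [h1, h2] <;>
        simp [abs_sub_comm]
  rw [hmain]
  -- bridge to prefix sums
  have hpref : (∀ n ≤ m + 1, S n = 0 ∨ S n = a) ↔
      (∀ p, p <+: l → (0:ℤ) + p.sum = 0 ∨ (0:ℤ) + p.sum = a) := by
    constructor
    · intro H p hp
      have hlen : p.length ≤ m + 1 := by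
        have := hp.length_le
        rwa [hl, List.length_ofFn] at this
      rw [List.prefix_iff_eq_take.mp hp, htake p.length hlen]
      simpa using H p.length hlen
    · intro H n hn
      have := H (l.take n) (List.take_prefix n l)
      rw [htake n hn] at this
      simpa using this
  have hmem : ∀ x ∈ l, x = 0 ∨ x = a ∨ x = -a := by
    intro x hx
    rw [hl] at hx
    obtain ⟨j, rfl⟩ := List.mem_ofFn.mp hx
    exact hf j
  have hkey := key_lemma a ha l 0 (Or.inl rfl) hmem
  rw [← alt_main a ha]
  constructor
  · rintro ⟨hall, hlast⟩
    have hAlt := hkey.mp (hpref.mp hall)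
    have hls : l.sum = a := by rw [hlsum, htot]; exact hlast
    rwa [hls, zero_add] at hAlt
  · intro hAlt
    have hfs : (l.filter fun x => decide (x ≠ 0)).sum = l.sum := sum_filter_ne_zero l
    have hsum : l.sum = a := by
      have h2 := ((altSeq_iff a _ 0 a).mp hAlt).2
      omega
    have hAlt' : AltSeq a 0 (l.filter fun x => decide (x ≠ 0)) (0 + l.sum) := by
      rw [show (0:ℤ) + l.sum = a by omega]
      exact hAlt
    have hall := hpref.mpr (hkey.mpr hAlt')
    refine ⟨hall, ?_⟩
    have hT := htake (m + 1) le_rfl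
    rw [List.take_of_length_le (by rw [hl, List.length_ofFn])] at hT
    rw [← hT, hsum]
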